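/- Let τ ∈ ℂ with Im τ > 0 and set q = exp(2πi·τ). Then, as u → 0 in ℂ ∖ {0} (with u in a sufficiently small punctured neighbourhood of 0, so that exp(2πiu) ≠ q^n for all n ∈ ℤ), the function u ↦ (2πi)² · 𝒲(exp(2πi·u), q) − 1/u² converges to the limit G₂(τ). In particular the singularity of (2πi)²𝒲(exp(2πiu), q) at u = 0 has principal part 1/u². -/

import Mathlib

open Real Complex Filter

noncomputable section
namespace Complex

def abs : AbsoluteValue ℂ ℝ := IsAbsoluteValue.toAbsoluteValue (norm : ℂ → ℝ)

@[simp] lemma abs_apply (z : ℂ) : Complex.abs z = ‖z‖ := rfl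

lemma norm_eq_abs (z : ℂ) : ‖z‖ = Complex.abs z := rfl

lemma abs_ofReal (r : ℝ) : Complex.abs r = |r| := Complex.norm_real r

lemma abs_exp (z : ℂ) : Complex.abs (Complex.exp z) = Real.exp z.re := Complex.norm_exp z

lemma abs_re_le_abs (z : ℂ) : |z.re| ≤ Complex.abs z := Complex.abs_re_le_norm z

lemma abs_im_le_abs (z : ℂ) : |z.im| ≤ Complex.abs z := Complex.abs_im_le_norm z

lemma abs_le_abs_re_add_abs_im (z : ℂ) : Complex.abs z ≤ |z.re| + |z.im| :=
  Complex.norm_le_abs_re_add_abs_im z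

lemma continuous_abs : Continuous Complex.abs := continuous_norm

end Complex

namespace WAux

def c : ℂ := 2 * (π : ℂ) * Complex.I

def ee (z : ℂ) : ℂ := Complex.exp (c * z)

def B (z : ℂ) : ℂ := c ^ 2 * (ee z / (1 - ee z) ^ 2)

def g (z : ℂ) : ℂ := ∑' n : ℤ, 1 / (z + (n : ℂ)) ^ 2

lemma c_ne : c ≠ 0 := by
  simp [c, Real.pi_ne_zero, Complex.I_ne_zero, Complex.ofReal_ne_zero]

lemma abs_c : Complex.abs c = 2 * π := by
  simp [c, Complex.abs_ofReal, _root_.abs_of_nonneg Real.pi_nonneg]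

lemma abs_ee (z : ℂ) : Complex.abs (ee z) = Real.exp (-(2 * π * z.im)) := by
  rw [ee, Complex.abs_exp]
  congr 1
  simp [c]

lemma ee_int (n : ℤ) : ee n = 1 := by
  rw [ee, mul_comm]
  exact Complex.exp_int_mul_two_pi_mul_I n

lemma ee_add_int (z : ℂ) (n : ℤ) : ee (z + n) = ee z := by
  rw [ee, mul_add, Complex.exp_add, ← ee, ← ee, ee_int, mul_one]

lemma ee_eq_one_iff {z : ℂ} : ee z = 1 ↔ ∃ n : ℤ, z = n := by
  rw [ee, Complex.exp_eq_one_iff]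
  constructor
  · rintro ⟨n, hn⟩
    refine ⟨n, ?_⟩
    have hc : c ≠ 0 := c_ne
    apply mul_left_cancel₀ hc
    rw [hn, c]
    ring
  · rintro ⟨n, rfl⟩
    exact ⟨n, by rw [c]; ring⟩

lemma ne_int_of_ee {z : ℂ} (hz : ee z ≠ 1) (n : ℤ) : z + n ≠ 0 := by
  intro h
  refine hz (ee_eq_one_iff.mpr ⟨-n, ?_⟩)
  push_cast
  linear_combination h

lemma ee_sq (z : ℂ) : ee z = ee (z / 2) ^ 2 := by
  rw [ee, ee, ← Complex.exp_nat_mul]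
  norm_num
  ring_nf

lemma ee_half_shift (z : ℂ) : ee ((z + 1) / 2) = - ee (z / 2) := by
  have : c * ((z + 1) / 2) = c * (z / 2) + π * Complex.I := by
    rw [c]; ring
  rw [ee, this, Complex.exp_add, Complex.exp_pi_mul_I, ← ee]
  ring

lemma ee_half_ne {z : ℂ} (hz : ee z ≠ 1) : ee (z / 2) ≠ 1 ∧ ee (z / 2) ≠ -1 := by
  constructor <;> intro h <;> apply hz <;> rw [ee_sq z, h] <;> ring


lemma abs_intCast' (n : ℤ) : Complex.abs (n : ℂ) = |(n : ℝ)| := by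
  rw [show ((n:ℂ)) = ((n:ℝ):ℂ) by push_cast; ring, Complex.abs_ofReal]

lemma summable_base : Summable (fun n : ℤ => 4 / (n : ℝ) ^ 2) := by
  have := (summable_one_div_int_pow (p := 2)).mpr one_lt_two
  simpa [div_eq_mul_inv, one_div] using this.mul_left 4

lemma abs_add_lower (z : ℂ) (n : ℤ) : |(n : ℝ)| - Complex.abs z ≤ Complex.abs (z + n) := by
  have h := Complex.abs.add_le (z + (n:ℂ)) (-z)
  have h2 : z + (n:ℂ) + -z = (n:ℂ) := by ring
  rw [h2, map_neg_eq_map, abs_intCast'] at h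
  linarith

lemma one_le_abs_cast {n : ℤ} (hn : n ≠ 0) : (1:ℝ) ≤ |(n : ℝ)| := by
  have : (1:ℤ) ≤ |n| := Int.one_le_abs hn
  calc (1:ℝ) ≤ ((|n| : ℤ) : ℝ) := by exact_mod_cast this
    _ = |(n:ℝ)| := by push_cast; ring

lemma bound_of_half {z : ℂ} {n : ℤ} (h1 : (1:ℝ) ≤ |(n : ℝ)|)
    (h2 : |(n : ℝ)| / 2 ≤ Complex.abs (z + n)) :
    ‖1 / (z + (n : ℂ)) ^ 2‖ ≤ 4 / (n : ℝ) ^ 2 := by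
  have h3 : (0 : ℝ) < |(n : ℝ)| / 2 := by linarith
  rw [norm_div, norm_one, norm_pow, Complex.norm_eq_abs]
  have h4 : (|(n : ℝ)| / 2) ^ 2 ≤ Complex.abs (z + n) ^ 2 := pow_le_pow_left₀ h3.le h2 2
  have h5 : (0:ℝ) < (|(n : ℝ)| / 2) ^ 2 := by positivity
  calc 1 / Complex.abs (z + (n:ℂ)) ^ 2 ≤ 1 / ((|(n : ℝ)| / 2) ^ 2) :=
        one_div_le_one_div_of_le h5 h4
    _ = 4 / (n : ℝ) ^ 2 := by rw [div_pow, _root_.sq_abs, one_div_div]; norm_num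

lemma abs_term_le {u : ℂ} (hu : Complex.abs u ≤ 1 / 2) {n : ℤ} (hn : n ≠ 0) :
    ‖1 / (u + (n : ℂ)) ^ 2‖ ≤ 4 / (n : ℝ) ^ 2 := by
  refine bound_of_half (one_le_abs_cast hn) ?_
  have := abs_add_lower u n
  have h1 := one_le_abs_cast hn
  linarith

lemma abs_term_le_re {z : ℂ} (hz : |z.re| ≤ 1 / 2) {n : ℤ} (hn : n ≠ 0) :
    ‖1 / (z + (n : ℂ)) ^ 2‖ ≤ 4 / (n : ℝ) ^ 2 := by
  have h1 := one_le_abs_cast hn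
  refine bound_of_half h1 ?_
  have hre : |(z + (n:ℂ)).re| ≤ Complex.abs (z + n) := Complex.abs_re_le_abs _
  have he : (z + (n:ℂ)).re = z.re + (n:ℝ) := by simp
  rw [he] at hre
  have h4 := abs_sub_abs_le_abs_sub ((n:ℝ)) (-z.re)
  rw [abs_neg, sub_neg_eq_add, add_comm] at h4
  linarith

lemma summable_g (z : ℂ) : Summable (fun n : ℤ => 1 / (z + (n : ℂ)) ^ 2) := by
  apply Summable.of_norm_bounded_eventually summable_base
  rw [Filter.eventually_cofinite]
  have hceil : (0:ℤ) ≤ ⌈2 * Complex.abs z⌉ := Int.ceil_nonneg (by positivity)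
  apply Set.Finite.subset
    (Set.finite_Icc (-(⌈2 * Complex.abs z⌉ + 1)) (⌈2 * Complex.abs z⌉ + 1))
  intro n hn
  simp only [Set.mem_setOf_eq] at hn
  simp only [Set.mem_Icc]
  by_contra hcon
  apply hn
  have hcase : n < -(⌈2 * Complex.abs z⌉ + 1) ∨ ⌈2 * Complex.abs z⌉ + 1 < n := by omega
  have hM : 2 * Complex.abs z ≤ ((⌈2 * Complex.abs z⌉ : ℤ) : ℝ) := Int.le_ceil _
  have hkey : 2 * Complex.abs z + 1 ≤ |(n : ℝ)| := by
    rcases hcase with h | h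
    · have h' : (n:ℝ) < -(((⌈2 * Complex.abs z⌉ : ℤ):ℝ) + 1) := by exact_mod_cast h
      have hneg : (n:ℝ) < 0 := by
        have : (0:ℝ) ≤ ((⌈2 * Complex.abs z⌉ : ℤ):ℝ) := by exact_mod_cast hceil
        linarith
      rw [abs_of_neg hneg]
      linarith
    · have h' : ((⌈2 * Complex.abs z⌉ : ℤ):ℝ) + 1 < (n:ℝ) := by exact_mod_cast h
      have hpos : (0:ℝ) < (n:ℝ) := by
        have : (0:ℝ) ≤ ((⌈2 * Complex.abs z⌉ : ℤ):ℝ) := by exact_mod_cast hceil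
        linarith
      rw [abs_of_pos hpos]
      linarith
  have h1 : (1:ℝ) ≤ |(n:ℝ)| := by nlinarith [Complex.abs.nonneg z]
  refine bound_of_half h1 ?_
  have := abs_add_lower z n
  linarith

lemma quarter (w : ℂ) : 1 / (w / 2) ^ 2 = 4 / w ^ 2 := by
  rcases eq_or_ne w 0 with h | h
  · simp [h]
  · field_simp
    norm_num

lemma tsum_split_zero (f : ℤ → ℂ) (hf : Summable f) :
    ∑' n, f n = f 0 + ∑' n : {n : ℤ // n ≠ 0}, f (n : ℤ) := by
  have h := hf.tsum_subtype_add_tsum_subtype_compl ({0} : Set ℤ)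
  rw [tsum_singleton 0 f] at h
  rw [← h]
  congr 1
  try exact ((Equiv.subtypeEquivRight (fun n => by simp)).tsum_eq
    (fun n : {n : ℤ // n ≠ 0} => f (n : ℤ))).symm

lemma g_add_int (z : ℂ) (k : ℤ) : g (z + k) = g z := by
  rw [g, g, ← (Equiv.addRight k).tsum_eq (fun n : ℤ => 1 / (z + (n:ℂ)) ^ 2)]
  apply tsum_congr
  intro n
  simp only [Equiv.coe_addRight]
  push_cast
  ring_nf

lemma g_dup (z : ℂ) : g (z / 2) + g ((z + 1) / 2) = 4 * g z := by
  set f0 : ℤ → ℂ := fun n => 1 / (z + (n:ℂ)) ^ 2 with hf0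
  have hS : Summable f0 := summable_g z
  have hinjE : Function.Injective (fun n : ℤ => 2 * n) := fun a b h => by
    simp only at h; omega
  have hinjO : Function.Injective (fun n : ℤ => 2 * n + 1) := fun a b h => by
    simp only at h; omega
  have hE : HasSum (fun n : ℤ => f0 (2 * n)) (∑' n : ℤ, f0 (2 * n)) :=
    (hS.comp_injective hinjE).hasSum
  have hO : HasSum (fun n : ℤ => f0 (2 * n + 1)) (∑' n : ℤ, f0 (2 * n + 1)) :=
    (hS.comp_injective hinjO).hasSum
  have heven : HasSum (f0 ∘ (↑) : Set.range (fun n : ℤ => 2 * n) → ℂ)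
      (∑' n : ℤ, f0 (2 * n)) := (Function.Injective.hasSum_range_iff hinjE).mpr hE
  have hodd : HasSum (f0 ∘ (↑) : Set.range (fun n : ℤ => 2 * n + 1) → ℂ)
      (∑' n : ℤ, f0 (2 * n + 1)) := (Function.Injective.hasSum_range_iff hinjO).mpr hO
  have hdisj : Disjoint (Set.range fun n : ℤ => 2 * n) (Set.range fun n : ℤ => 2 * n + 1) := by
    rw [Set.disjoint_left]
    rintro x ⟨a, rfl⟩ ⟨b, hb⟩
    simp only at hb
    omega
  have hsum2 := HasSum.add_disjoint hdisj heven hodd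
  have huniv : (Set.range fun n : ℤ => 2 * n) ∪ (Set.range fun n : ℤ => 2 * n + 1) =
      Set.univ := by
    ext n
    simp only [Set.mem_union, Set.mem_range, Set.mem_univ, iff_true]
    rcases Int.even_or_odd n with ⟨k, hk⟩ | ⟨k, hk⟩
    · exact Or.inl ⟨k, by omega⟩
    · exact Or.inr ⟨k, by omega⟩
  rw [huniv] at hsum2
  have hfull : HasSum f0 (∑' n : ℤ, f0 (2 * n) + ∑' n : ℤ, f0 (2 * n + 1)) :=
    (hasSum_subtype_iff_of_support_subset (Set.subset_univ _)).mp hsum2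
  have hgz : g z = ∑' n : ℤ, f0 (2 * n) + ∑' n : ℤ, f0 (2 * n + 1) :=
    hS.hasSum.unique hfull
  have he1 : g (z / 2) = 4 * ∑' n : ℤ, f0 (2 * n) := by
    rw [g, ← tsum_mul_left]
    apply tsum_congr
    intro n
    have hw : z / 2 + (n : ℂ) = (z + (2 * n : ℤ)) / 2 := by push_cast; ring
    rw [hw, quarter]
    simp only [hf0]
    rw [mul_one_div]
  have he2 : g ((z + 1) / 2) = 4 * ∑' n : ℤ, f0 (2 * n + 1) := by
    rw [g, ← tsum_mul_left]
    apply tsum_congr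
    intro n
    have hw : (z + 1) / 2 + (n : ℂ) = (z + (2 * n + 1 : ℤ)) / 2 := by push_cast; ring
    rw [hw, quarter]
    simp only [hf0]
    rw [mul_one_div]
  rw [he1, he2, hgz]
  ring

lemma B_dup {z : ℂ} (hz : ee z ≠ 1) : B (z / 2) + B ((z + 1) / 2) = 4 * B z := by
  obtain ⟨h1, h2⟩ := ee_half_ne hz
  have hsq := ee_sq z
  rw [B, B, B, ee_half_shift, hsq]
  set s := ee (z / 2) with hs
  have hs1 : 1 - s ≠ 0 := fun h => h1 (by linear_combination -h)
  have hs2 : 1 + s ≠ 0 := fun h => h2 (by linear_combination h)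
  have hz' : 1 - s ^ 2 ≠ 0 := fun h => hz (by rw [hsq]; linear_combination -h)
  rw [sub_neg_eq_add]
  field_simp
  ring

lemma B_near_zero {z : ℂ} (h0 : z ≠ 0) (hz : Complex.abs z ≤ 1 / 10) :
    Complex.abs (B z - 1 / z ^ 2) ≤ 4 * (2 * π) ^ 2 := by
  set w := c * z with hw
  have hwne : w ≠ 0 := mul_ne_zero c_ne h0
  have hwpos : 0 < Complex.abs w := by
    simpa using Complex.abs.pos hwne
  have habsw : Complex.abs w = 2 * π * Complex.abs z := by rw [hw, map_mul, abs_c]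
  have hwle : Complex.abs w ≤ 2 / 3 := by
    rw [habsw]
    nlinarith [Real.pi_lt_d2, Real.pi_pos, Complex.abs.nonneg z]
  have hwle1 : Complex.abs w ≤ 1 := le_trans hwle (by norm_num)
  set r := Complex.exp w - (1 + w + w ^ 2 / 2) with hr
  have hrb : Complex.abs r ≤ 2 / 9 * Complex.abs w ^ 3 := by
    have h := Complex.exp_bound hwle1 (n := 3) (by norm_num)
    have hsum : ∑ m ∈ Finset.range 3, w ^ m / (Nat.factorial m) = 1 + w + w ^ 2 / 2 := by
      rw [Finset.sum_range_succ, Finset.sum_range_succ, Finset.sum_range_succ]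
      norm_num [Nat.factorial]
    rw [hsum] at h
    have hconst : ((3:ℕ).succ : ℝ) * (((Nat.factorial 3) * 3 : ℕ) : ℝ)⁻¹ = 2 / 9 := by
      norm_num [Nat.factorial]
    rw [hr]
    calc Complex.abs (Complex.exp w - (1 + w + w ^ 2 / 2))
        ≤ Complex.abs w ^ 3 * (((3:ℕ).succ : ℝ) * (((Nat.factorial 3) * 3 : ℕ) : ℝ)⁻¹) := by
          exact_mod_cast h
      _ = 2 / 9 * Complex.abs w ^ 3 := by rw [hconst]; ring
  set s := Complex.exp w - 1 with hs_def
  have hsw : Complex.abs (s - w) ≤ 3 / 4 * Complex.abs w ^ 2 := by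
    have h := Complex.exp_bound hwle1 (n := 2) (by norm_num)
    have hsum : ∑ m ∈ Finset.range 2, w ^ m / (Nat.factorial m) = 1 + w := by
      rw [Finset.sum_range_succ, Finset.sum_range_succ]
      norm_num [Nat.factorial]
    rw [hsum] at h
    have hconst : ((2:ℕ).succ : ℝ) * (((Nat.factorial 2) * 2 : ℕ) : ℝ)⁻¹ = 3 / 4 := by
      norm_num [Nat.factorial]
    have heq : s - w = Complex.exp w - (1 + w) := by rw [hs_def]; ring
    rw [heq]
    calc Complex.abs (Complex.exp w - (1 + w))
        ≤ Complex.abs w ^ 2 * (((2:ℕ).succ : ℝ) * (((Nat.factorial 2) * 2 : ℕ) : ℝ)⁻¹) := by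
          exact_mod_cast h
      _ = 3 / 4 * Complex.abs w ^ 2 := by rw [hconst]; ring
  have hslow : Complex.abs w / 2 ≤ Complex.abs s := by
    have h1 : Complex.abs w ≤ Complex.abs s + Complex.abs (s - w) := by
      have h := Complex.abs.add_le s (w - s)
      have h2 : s + (w - s) = w := by ring
      have h3 : Complex.abs (w - s) = Complex.abs (s - w) := by
        rw [← AbsoluteValue.map_neg Complex.abs (w - s)]; congr 1; ring
      rw [h2, h3] at h
      exact h
    nlinarith [Complex.abs.nonneg (s - w), Complex.abs.nonneg s]
  have hsne : s ≠ 0 := by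
    intro h
    rw [h] at hslow
    simp at hslow
    nlinarith [Complex.norm_eq_abs w]
  have hexp : Complex.exp w = s + 1 := by rw [hs_def]; ring
  -- the identity
  have hiden : B z - 1 / z ^ 2 = c ^ 2 * ((w ^ 2 * Complex.exp w - s ^ 2) / (w ^ 2 * s ^ 2)) := by
    rw [B, ee, ← hw, hexp]
    have h1 : (1 : ℂ) - (s + 1) = -s := by ring
    rw [h1, hw]
    have hc := c_ne
    field_simp
  -- numerator bound
  have hns : w ^ 2 * Complex.exp w - s ^ 2 = w ^ 4 / 4 - 2 * w * r - r ^ 2 := by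
    have h1 : Complex.exp w = 1 + w + w ^ 2 / 2 + r := by rw [hr]; ring
    rw [hs_def, h1]
    ring
  have hnum : Complex.abs (w ^ 2 * Complex.exp w - s ^ 2) ≤ Complex.abs w ^ 4 := by
    rw [hns]
    have t1 : Complex.abs (w ^ 4 / 4 - 2 * w * r - r ^ 2)
        ≤ Complex.abs (w ^ 4 / 4) + Complex.abs (2 * w * r) + Complex.abs (r ^ 2) := by
      calc Complex.abs (w ^ 4 / 4 - 2 * w * r - r ^ 2)
          ≤ Complex.abs (w ^ 4 / 4 - 2 * w * r) + Complex.abs (r ^ 2) := by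
            have := Complex.abs.add_le (w ^ 4 / 4 - 2 * w * r) (-(r ^ 2))
            simpa [sub_eq_add_neg] using this
        _ ≤ Complex.abs (w ^ 4 / 4) + Complex.abs (2 * w * r) + Complex.abs (r ^ 2) := by
            have := Complex.abs.add_le (w ^ 4 / 4) (-(2 * w * r))
            have h2 : Complex.abs (w ^ 4 / 4 - 2 * w * r)
                ≤ Complex.abs (w ^ 4 / 4) + Complex.abs (2 * w * r) := by
              simpa [sub_eq_add_neg] using this
            linarith
    have e1 : Complex.abs (w ^ 4 / 4) = Complex.abs w ^ 4 / 4 := by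
      rw [map_div₀, map_pow]; norm_num
    have e2 : Complex.abs (2 * w * r) = 2 * Complex.abs w * Complex.abs r := by
      rw [map_mul, map_mul]; norm_num
    have e3 : Complex.abs (r ^ 2) = Complex.abs r ^ 2 := by rw [map_pow]
    rw [e1, e2, e3] at t1
    have ha := Complex.abs.nonneg w
    have hb := Complex.abs.nonneg r
    have k1 : 2 * Complex.abs w * Complex.abs r ≤ (4/9) * Complex.abs w ^ 4 := by
      nlinarith [mul_le_mul_of_nonneg_left hrb (by positivity : (0:ℝ) ≤ 2 * Complex.abs w)]
    have k2 : Complex.abs r ^ 2 ≤ (4/81) * Complex.abs w ^ 6 := by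
      nlinarith [pow_le_pow_left₀ hb hrb 2]
    have k3 : Complex.abs w ^ 6 ≤ Complex.abs w ^ 4 :=
      pow_le_pow_of_le_one ha hwle1 (by norm_num)
    have k4 : (0:ℝ) ≤ Complex.abs w ^ 4 := by positivity
    linarith
  -- final assembly
  rw [hiden, map_mul, map_pow, abs_c, map_div₀, map_mul, map_pow, map_pow]
  have hden : Complex.abs w ^ 4 / 4 ≤ Complex.abs w ^ 2 * Complex.abs s ^ 2 := by
    have h1 : (Complex.abs w / 2) ^ 2 ≤ Complex.abs s ^ 2 :=
      pow_le_pow_left₀ (by positivity) hslow 2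
    nlinarith [hwpos]
  have hdpos : (0:ℝ) < Complex.abs w ^ 4 / 4 := by positivity
  have hfrac : Complex.abs (w ^ 2 * Complex.exp w - s ^ 2) /
      (Complex.abs w ^ 2 * Complex.abs s ^ 2) ≤ 4 := by
    calc Complex.abs (w ^ 2 * Complex.exp w - s ^ 2) /
        (Complex.abs w ^ 2 * Complex.abs s ^ 2)
        ≤ Complex.abs w ^ 4 / (Complex.abs w ^ 4 / 4) := by
          apply div_le_div₀ (by positivity) hnum hdpos hden
      _ = 4 := by field_simp
  calc (2 * π) ^ 2 * (Complex.abs (w ^ 2 * Complex.exp w - s ^ 2) /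
        (Complex.abs w ^ 2 * Complex.abs s ^ 2)) ≤ (2 * π) ^ 2 * 4 := by
        apply mul_le_mul_of_nonneg_left hfrac (by positivity)
    _ = 4 * (2 * π) ^ 2 := by ring

def K1 : ℝ := ∑' n : ℤ, 4 / (n : ℝ) ^ 2

lemma g_sub_strip {z : ℂ} (hre : |z.re| ≤ 1 / 2) :
    Complex.abs (g z - 1 / z ^ 2) ≤ K1 := by
  have hsg := summable_g z
  have hgeq : g z - 1 / z ^ 2 = ∑' n : {n : ℤ // n ≠ 0}, 1 / (z + ((n : ℤ) : ℂ)) ^ 2 := by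
    have hsplit := tsum_split_zero _ hsg
    have h0 : (1 : ℂ) / (z + ((0 : ℤ) : ℂ)) ^ 2 = 1 / z ^ 2 := by norm_num
    rw [g, hsplit, h0]
    ring
  rw [hgeq, ← Complex.norm_eq_abs]
  have hsubbase : Summable (fun n : {n : ℤ // n ≠ 0} => 4 / ((n : ℤ) : ℝ) ^ 2) :=
    summable_base.subtype _
  have hsub : Summable (fun n : {n : ℤ // n ≠ 0} => ‖1 / (z + ((n : ℤ) : ℂ)) ^ 2‖) := by
    apply Summable.of_nonneg_of_le (fun n => norm_nonneg _)
      (fun n => abs_term_le_re hre n.2) hsubbase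
  calc ‖∑' n : {n : ℤ // n ≠ 0}, 1 / (z + ((n : ℤ) : ℂ)) ^ 2‖
      ≤ ∑' n : {n : ℤ // n ≠ 0}, ‖1 / (z + ((n : ℤ) : ℂ)) ^ 2‖ := norm_tsum_le_tsum_norm hsub
    _ ≤ ∑' n : {n : ℤ // n ≠ 0}, 4 / ((n : ℤ) : ℝ) ^ 2 :=
        Summable.tsum_le_tsum (fun n => abs_term_le_re hre n.2) hsub hsubbase
    _ ≤ K1 := by
        rw [K1]
        exact Summable.tsum_le_tsum_of_inj (fun n : {n : ℤ // n ≠ 0} => (n : ℤ))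
          (fun a b h => Subtype.ext h) (fun c _ => by positivity) (fun b => le_refl _)
          hsubbase summable_base

lemma one_sub_abs_le (e : ℂ) : 1 - Complex.abs e ≤ Complex.abs (1 - e) := by
  have h := Complex.abs.add_le (1 - e) e
  simp only [sub_add_cancel] at h
  simpa using h

lemma abs_sub_one_le (e : ℂ) : Complex.abs e - 1 ≤ Complex.abs (1 - e) := by
  have h := Complex.abs.add_le (e - 1) 1
  rw [sub_add_cancel] at h
  have h3 : Complex.abs (1 - e) = Complex.abs (e - 1) := by
    rw [← AbsoluteValue.map_neg Complex.abs (e - 1)]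
    congr 1
    ring
  rw [h3]
  simp at h
  linarith [Complex.norm_eq_abs e, Complex.norm_eq_abs (e - 1)]

lemma exp_one_ge_two : (2 : ℝ) ≤ Real.exp 1 := by
  have := Real.add_one_le_exp (1 : ℝ)
  linarith

lemma B_bound_im {z : ℂ} (him : 1 ≤ |z.im|) : Complex.abs (B z) ≤ 2 * (2 * π) ^ 2 := by
  have habs : Complex.abs (ee z) = Real.exp (-(2 * π * z.im)) := abs_ee z
  set x := Complex.abs (ee z) with hx
  have hBabs : Complex.abs (B z) = (2 * π) ^ 2 * (x / Complex.abs (1 - ee z) ^ 2) := by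
    rw [B, map_mul, map_pow, abs_c, map_div₀, map_pow]
  rw [hBabs]
  have hpi : 1 ≤ 2 * π := by nlinarith [Real.pi_gt_three]
  rcases abs_cases z.im with ⟨he, h1⟩ | ⟨he, h1⟩
  · -- z.im ≥ 1 (since |z.im| = z.im ≥ 1)
    have him' : 1 ≤ z.im := by rw [← he]; exact him
    have hxle : x ≤ 1 / 2 := by
      rw [habs]
      have h2 : -(2 * π * z.im) ≤ -1 := by nlinarith
      calc Real.exp (-(2 * π * z.im)) ≤ Real.exp (-1) := Real.exp_le_exp.mpr h2
        _ = (Real.exp 1)⁻¹ := by rw [← Real.exp_neg]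
        _ ≤ 1 / 2 := by
            rw [one_div]
            exact inv_anti₀ (by norm_num) exp_one_ge_two
    have hd : 1 / 2 ≤ Complex.abs (1 - ee z) := by
      have := one_sub_abs_le (ee z)
      linarith
    have hfrac : x / Complex.abs (1 - ee z) ^ 2 ≤ 2 := by
      have hdpos : (0:ℝ) < Complex.abs (1 - ee z) := by linarith
      have hd2 : (1/2 : ℝ) ^ 2 ≤ Complex.abs (1 - ee z) ^ 2 :=
        pow_le_pow_left₀ (by norm_num) hd 2
      rw [div_le_iff₀ (pow_pos hdpos 2)]
      nlinarith
    nlinarith [Real.pi_pos]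
  · -- z.im ≤ -1
    have him' : z.im ≤ -1 := by nlinarith
    have hxge : 2 ≤ x := by
      rw [habs]
      have h2 : (1:ℝ) ≤ -(2 * π * z.im) := by nlinarith
      calc (2:ℝ) ≤ Real.exp 1 := exp_one_ge_two
        _ ≤ Real.exp (-(2 * π * z.im)) := Real.exp_le_exp.mpr h2
    have hd : x / 2 ≤ Complex.abs (1 - ee z) := by
      have := abs_sub_one_le (ee z)
      rw [← hx] at this
      linarith
    have hfrac : x / Complex.abs (1 - ee z) ^ 2 ≤ 2 := by
      have hdpos : (0:ℝ) < Complex.abs (1 - ee z) := by linarith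
      have hd2 : (x/2 : ℝ) ^ 2 ≤ Complex.abs (1 - ee z) ^ 2 :=
        pow_le_pow_left₀ (by positivity) hd 2
      rw [div_le_iff₀ (pow_pos hdpos 2)]
      nlinarith
    nlinarith [Real.pi_pos]

lemma B_sub_bound_im {z : ℂ} (him : 1 ≤ |z.im|) :
    Complex.abs (B z - 1 / z ^ 2) ≤ 2 * (2 * π) ^ 2 + 1 := by
  have h1 := B_bound_im him
  have habsz : 1 ≤ Complex.abs z := le_trans him (Complex.abs_im_le_abs z)
  have h2 : Complex.abs (1 / z ^ 2) ≤ 1 := by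
    rw [map_div₀, map_one, map_pow]
    rw [div_le_one (by positivity)]
    nlinarith
  calc Complex.abs (B z - 1 / z ^ 2) ≤ Complex.abs (B z) + Complex.abs (1 / z ^ 2) := by
        have h := Complex.abs.add_le (B z) (-(1 / z ^ 2))
        simpa [sub_eq_add_neg] using h
    _ ≤ 2 * (2 * π) ^ 2 + 1 := by linarith

lemma B_sub_bound_mid : ∃ C : ℝ, ∀ z : ℂ, |z.re| ≤ 1 / 2 → |z.im| ≤ 1 →
    1 / 10 ≤ Complex.abs z → Complex.abs (B z - 1 / z ^ 2) ≤ C := by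
  set K : Set ℂ := {z | |z.re| ≤ 1 / 2 ∧ |z.im| ≤ 1 ∧ 1 / 10 ≤ Complex.abs z} with hK
  have hKne : ∀ z ∈ K, z ≠ 0 := by
    rintro z ⟨-, -, h3⟩ rfl
    simp at h3
    linarith
  have hKee : ∀ z ∈ K, 1 - ee z ≠ 0 := by
    rintro z ⟨h1, h2, h3⟩ h
    have hee : ee z = 1 := by linear_combination -h
    obtain ⟨n, rfl⟩ := ee_eq_one_iff.mp hee
    rw [Complex.intCast_re] at h1
    have hn0 : n = 0 := by
      by_contra hne
      have := one_le_abs_cast hne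
      linarith
    subst hn0
    simp at h3
    linarith
  have hKc : IsCompact K := by
    apply Metric.isCompact_of_isClosed_isBounded
    · have : K = (fun z : ℂ => |z.re|) ⁻¹' (Set.Iic (1/2)) ∩
          ((fun z : ℂ => |z.im|) ⁻¹' (Set.Iic 1) ∩ (Complex.abs) ⁻¹' (Set.Ici (1/10))) := by
        ext z
        simp [hK, Set.mem_setOf_eq, and_assoc]
      rw [this]
      refine IsClosed.inter ?_ (IsClosed.inter ?_ ?_)
      · exact IsClosed.preimage (continuous_abs.comp Complex.continuous_re) isClosed_Iic
      · exact IsClosed.preimage (continuous_abs.comp Complex.continuous_im) isClosed_Iic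
      · exact IsClosed.preimage Complex.continuous_abs isClosed_Ici
    · apply Bornology.IsBounded.subset (Metric.isBounded_closedBall (x := (0:ℂ)) (r := 2))
      rintro z ⟨h1, h2, -⟩
      rw [Metric.mem_closedBall, dist_zero_right, Complex.norm_eq_abs]
      have := Complex.abs_le_abs_re_add_abs_im z
      linarith
  have hcont : ContinuousOn (fun z => B z - 1 / z ^ 2) K := by
    apply ContinuousOn.sub
    · apply ContinuousOn.mul continuousOn_const
      apply ContinuousOn.div
      · apply Continuous.continuousOn
        unfold ee
        exact Complex.continuous_exp.comp (continuous_const.mul continuous_id)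
      · apply Continuous.continuousOn
        apply Continuous.pow
        apply Continuous.sub continuous_const
        unfold ee
        exact Complex.continuous_exp.comp (continuous_const.mul continuous_id)
      · intro z hz
        exact pow_ne_zero 2 (hKee z hz)
    · apply ContinuousOn.div continuousOn_const
      · exact (continuous_pow 2).continuousOn
      · intro z hz
        exact pow_ne_zero 2 (hKne z hz)
  obtain ⟨C, hC⟩ := hKc.exists_bound_of_continuousOn hcont
  refine ⟨C, fun z h1 h2 h3 => ?_⟩
  have := hC z ⟨h1, h2, h3⟩
  rwa [Complex.norm_eq_abs] at this

lemma B_add_int (z : ℂ) (k : ℤ) : B (z + k) = B z := by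
  rw [B, B, ee_add_int]

lemma abs_sub_le' (a b : ℂ) : Complex.abs (a - b) ≤ Complex.abs a + Complex.abs b := by
  rw [sub_eq_add_neg]
  refine le_trans (Complex.abs.add_le a (-b)) ?_
  rw [AbsoluteValue.map_neg]

lemma exists_global_bound : ∃ C : ℝ, ∀ z : ℂ, ee z ≠ 1 →
    Complex.abs (g z - B z) ≤ C := by
  obtain ⟨C0, hC0⟩ := B_sub_bound_mid
  refine ⟨K1 + max (4 * (2 * π) ^ 2) (max (2 * (2 * π) ^ 2 + 1) C0), fun z hz => ?_⟩
  -- reduce to strip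
  set k : ℤ := -(round z.re) with hk
  set z' := z + (k : ℂ) with hz'
  have hgz : g z' = g z := g_add_int z k
  have hBz : B z' = B z := B_add_int z k
  have heez : ee z' ≠ 1 := by rw [hz', ee_add_int]; exact hz
  have hre : |z'.re| ≤ 1 / 2 := by
    rw [hz']
    simp only [Complex.add_re, Complex.intCast_re, hk]
    push_cast
    have := abs_sub_round z.re
    have heq : z.re + -(round z.re : ℝ) = z.re - (round z.re : ℝ) := by ring
    rw [heq]
    exact this
  have him : z'.im = z.im := by rw [hz']; simp
  have key : Complex.abs (g z' - B z') ≤ K1 +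
      max (4 * (2 * π) ^ 2) (max (2 * (2 * π) ^ 2 + 1) C0) := by
    have hsplit : g z' - B z' = (g z' - 1 / z' ^ 2) - (B z' - 1 / z' ^ 2) := by ring
    have htri : Complex.abs (g z' - B z') ≤ Complex.abs (g z' - 1 / z' ^ 2) +
        Complex.abs (B z' - 1 / z' ^ 2) := by
      rw [hsplit]
      exact abs_sub_le' _ _
    have hg' : Complex.abs (g z' - 1 / z' ^ 2) ≤ K1 := g_sub_strip hre
    have hB' : Complex.abs (B z' - 1 / z' ^ 2) ≤
        max (4 * (2 * π) ^ 2) (max (2 * (2 * π) ^ 2 + 1) C0) := by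
      rcases le_or_gt 1 |z'.im| with him1 | him1
      · exact le_trans (B_sub_bound_im him1) (le_trans (le_max_left _ _) (le_max_right _ _))
      · rcases le_or_gt (Complex.abs z') (1/10) with habs | habs
        · have hz0 : z' ≠ 0 := by
            intro h
            apply heez
            rw [h, ee, mul_zero, Complex.exp_zero]
          exact le_trans (B_near_zero hz0 habs) (le_max_left _ _)
        · exact le_trans (hC0 z' hre him1.le habs.le)
            (le_trans (le_max_right _ _) (le_max_right _ _))
    linarith
  rw [hgz, hBz] at key
  exact key

lemma lipschitz {z : ℂ} (hz : ee z ≠ 1) : g z = B z := by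
  obtain ⟨C, hC⟩ := exists_global_bound
  have hiter : ∀ k : ℕ, ∀ w : ℂ, ee w ≠ 1 → Complex.abs (g w - B w) ≤ C / 2 ^ k := by
    intro k
    induction k with
    | zero => simpa using fun w hw => hC w hw
    | succ k ih =>
      intro w hw
      have h1 : ee (w / 2) ≠ 1 := by
        intro h
        apply hw
        rw [ee_sq w, h]
        norm_num
      have h2 : ee ((w + 1) / 2) ≠ 1 := by
        intro h
        apply hw
        have e1 : ee (w + 1) = ee w := by
          have := ee_add_int w 1
          push_cast at this
          exact this
        rw [← e1, ee_sq (w + 1), h]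
        norm_num
      have key : g w - B w =
          ((g (w / 2) - B (w / 2)) + (g ((w + 1) / 2) - B ((w + 1) / 2))) / 4 := by
        have hdg := g_dup w
        have hdB := B_dup hw
        field_simp
        linear_combination hdB - hdg
      rw [key]
      rw [map_div₀]
      have h4 : Complex.abs 4 = 4 := by
        norm_num
      rw [h4]
      have ha := ih (w / 2) h1
      have hb := ih ((w + 1) / 2) h2
      have htri : Complex.abs ((g (w / 2) - B (w / 2)) + (g ((w + 1) / 2) - B ((w + 1) / 2)))
          ≤ C / 2 ^ k + C / 2 ^ k :=
        le_trans (Complex.abs.add_le _ _) (by linarith)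
      rw [pow_succ]
      rw [div_le_div_iff₀ (by norm_num) (by positivity)]
      rw [← add_div] at htri
      have h2k : (0:ℝ) < 2 ^ k := by positivity
      calc Complex.abs ((g (w / 2) - B (w / 2)) + (g ((w + 1) / 2) - B ((w + 1) / 2))) *
            (2 ^ k * 2) ≤ (C + C) / 2 ^ k * (2 ^ k * 2) := by
            apply mul_le_mul_of_nonneg_right htri (by positivity)
        _ = C * 4 := by field_simp; ring
  have h0 : Complex.abs (g z - B z) ≤ 0 := by
    have ht : Tendsto (fun k : ℕ => C / 2 ^ k) atTop (nhds 0) := by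
      apply Filter.Tendsto.div_atTop tendsto_const_nhds
      exact tendsto_pow_atTop_atTop_of_one_lt one_lt_two
    exact ge_of_tendsto' ht (fun k => hiter k z hz)
  have h1 := Complex.abs.nonneg (g z - B z)
  have h2 : Complex.abs (g z - B z) = 0 := le_antisymm h0 h1
  have h3 := Complex.abs.eq_zero.mp h2
  linear_combination h3

lemma ee_ne_one_of_im {z : ℂ} (hz : z.im ≠ 0) : ee z ≠ 1 := by
  intro h
  obtain ⟨n, rfl⟩ := ee_eq_one_iff.mp h
  simp at hz

lemma continuousAt_B {z : ℂ} (hz : ee z ≠ 1) : ContinuousAt B z := by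
  have hcee : Continuous ee := by
    unfold ee
    exact Complex.continuous_exp.comp (continuous_const.mul continuous_id)
  apply ContinuousAt.mul continuousAt_const
  apply ContinuousAt.div (hcee.continuousAt)
  · exact ((continuous_const.sub hcee).pow 2).continuousAt
  · exact pow_ne_zero 2 (sub_ne_zero.mpr (Ne.symm hz))

set_option maxHeartbeats 1000000 in
lemma B_geom {t : ℝ} (ht : 0 < t) {τ : ℂ} (hτt : τ.im = t) {u : ℂ}
    (hu : |u.im| ≤ t / 2) {m : ℤ} (hm : m ≠ 0) :
    Complex.abs (B (u + (m : ℂ) * τ)) ≤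
      (2 * π) ^ 2 * Real.exp (-π * t) ^ m.natAbs / (1 - Real.exp (-π * t)) ^ 2 := by
  set ρ := Real.exp (-π * t) with hρ
  have hρ0 : 0 < ρ := Real.exp_pos _
  have hρ1 : ρ < 1 := by
    rw [hρ]
    apply Real.exp_lt_one_iff.mpr
    nlinarith [Real.pi_pos]
  set n : ℕ := m.natAbs with hn
  have hn1 : 1 ≤ n := by omega
  set z := u + (m : ℂ) * τ with hz
  have hzim : z.im = u.im + (m : ℝ) * t := by
    rw [hz]
    simp [Complex.add_im, Complex.mul_im, hτt]
  have hx : Complex.abs (ee z) = Real.exp (-(2 * π * z.im)) := abs_ee z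
  set x := Complex.abs (ee z) with hxd
  have hBabs : Complex.abs (B z) = (2 * π) ^ 2 * (x / Complex.abs (1 - ee z) ^ 2) := by
    rw [B, map_mul, map_pow, abs_c, map_div₀, map_pow]
  have hρn : ρ ^ n = Real.exp (-π * t * n) := by
    rw [hρ, ← Real.exp_nat_mul]
    congr 1
    ring
  have humem : -(t/2) ≤ u.im ∧ u.im ≤ t/2 := abs_le.mp hu
  have hπ := Real.pi_pos
  rcases lt_or_gt_of_ne hm with hmneg | hmpos
  · -- m ≤ -1 : x large
    have hmn : (m : ℝ) = -(n : ℝ) := by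
      rw [hn]
      push_cast [Nat.cast_natAbs]
      rw [abs_of_neg (by exact_mod_cast hmneg)]
      ring
    have hnr : (1 : ℝ) ≤ (n : ℝ) := by exact_mod_cast hn1
    have hxge : Real.exp (π * t) ^ n ≤ x := by
      rw [hx, ← Real.exp_nat_mul]
      apply Real.exp_le_exp.mpr
      rw [hzim, hmn]
      nlinarith [mul_nonneg hπ.le (by linarith [humem.2] : (0:ℝ) ≤ t - 2 * u.im),
        mul_nonneg (mul_nonneg hπ.le ht.le) (sub_nonneg.mpr hnr)]
    have hσ : Real.exp (π * t) = ρ⁻¹ := by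
      rw [hρ, ← Real.exp_neg]
      congr 1
      ring
    have hσn : ρ⁻¹ ^ n = (ρ ^ n)⁻¹ := by rw [inv_pow]
    have hxge' : (ρ ^ n)⁻¹ ≤ x := by rw [← hσn, ← hσ]; exact hxge
    have hρn0 : 0 < ρ ^ n := pow_pos hρ0 n
    have hρn1 : ρ ^ n ≤ ρ := pow_le_of_le_one hρ0.le hρ1.le (by omega)
    have hx1 : 1 < x := by
      have h1 : 1 < (ρ ^ n)⁻¹ := (one_lt_inv₀ hρn0).mpr (lt_of_le_of_lt hρn1 hρ1)
      linarith
    have hρx : 1 ≤ ρ ^ n * x := by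
      have h1 := mul_le_mul_of_nonneg_left hxge' hρn0.le
      rw [mul_inv_cancel₀ (ne_of_gt hρn0)] at h1
      exact h1
    set d := Complex.abs (1 - ee z) with hd
    have hd1 : x - 1 ≤ d := abs_sub_one_le (ee z)
    have hρx' : 1 ≤ ρ * x := by nlinarith
    have hd2 : (1 - ρ) * x ≤ d := by nlinarith
    have hdpos : 0 < d := by nlinarith
    have hd2sq : ((1 - ρ) * x) ^ 2 ≤ d ^ 2 :=
      pow_le_pow_left₀ (by nlinarith) hd2 2
    have hfrac : x / d ^ 2 ≤ ρ ^ n / (1 - ρ) ^ 2 := by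
      rw [div_le_div_iff₀ (pow_pos hdpos 2) (by nlinarith : (0:ℝ) < (1 - ρ) ^ 2)]
      have hkey : (0:ℝ) ≤ (1 - ρ) ^ 2 * x * (ρ ^ n * x - 1) := by
        apply mul_nonneg (mul_nonneg (by nlinarith) (by nlinarith))
        linarith
      nlinarith [hd2sq]
    rw [hBabs, mul_div_assoc]
    apply mul_le_mul_of_nonneg_left hfrac (by positivity)
  · -- m ≥ 1 : x small
    have hmn : (m : ℝ) = (n : ℝ) := by
      rw [hn]
      push_cast [Nat.cast_natAbs]
      rw [abs_of_pos (by exact_mod_cast hmpos)]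
    have hnr : (1 : ℝ) ≤ (n : ℝ) := by exact_mod_cast hn1
    have hxle : x ≤ ρ ^ n := by
      rw [hx, hρn]
      apply Real.exp_le_exp.mpr
      rw [hzim, hmn]
      nlinarith [mul_nonneg hπ.le (by linarith [humem.1] : (0:ℝ) ≤ t + 2 * u.im),
        mul_nonneg (mul_nonneg hπ.le ht.le) (sub_nonneg.mpr hnr)]
    have hρn1 : ρ ^ n ≤ ρ := pow_le_of_le_one hρ0.le hρ1.le (by omega)
    set d := Complex.abs (1 - ee z) with hd
    have hd1 : 1 - x ≤ d := one_sub_abs_le (ee z)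
    have hdge : 1 - ρ ≤ d := by nlinarith
    have hdpos : 0 < d := by nlinarith
    have hd2sq : (1 - ρ) ^ 2 ≤ d ^ 2 := pow_le_pow_left₀ (by nlinarith) hdge 2
    have hxpos : 0 < x := by
      rw [hx]
      exact Real.exp_pos _
    have hfrac : x / d ^ 2 ≤ ρ ^ n / (1 - ρ) ^ 2 := by
      rw [div_le_div_iff₀ (pow_pos hdpos 2) (by nlinarith : (0:ℝ) < (1 - ρ) ^ 2)]
      nlinarith [pow_pos hρ0 n]
    rw [hBabs, mul_div_assoc]
    apply mul_le_mul_of_nonneg_left hfrac (by positivity)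

lemma summable_geom_z {ρ : ℝ} (h0 : 0 ≤ ρ) (h1 : ρ < 1) :
    Summable (fun m : ℤ => ρ ^ m.natAbs) := by
  apply Summable.of_nat_of_neg
  · exact (summable_geometric_of_lt_one h0 h1).congr (fun n => by simp)
  · exact (summable_geometric_of_lt_one h0 h1).congr (fun n => by simp)

end WAux


open WAux in
set_option maxHeartbeats 1000000 in
/-- with `q = exp(2πiτ)`, as `u → 0` (through nonzero values),
`(2πi)² 𝒲(exp(2πiu), q) − 1/u²` tends to `G₂(τ)`; i.e. the principal part of
`(2πi)² 𝒲(exp(2πiu), q)` at `u = 0` is `1/u²`. -/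
theorem winding_W_principal_part (τ : ℂ) (hτ : 0 < τ.im)
    (q : ℂ) (hq : q = Complex.exp (2 * (π : ℂ) * Complex.I * τ)) :
    Tendsto
      (fun u : ℂ =>
        (2 * (π : ℂ) * Complex.I) ^ 2 *
            (∑' m : ℤ, Complex.exp (2 * (π : ℂ) * Complex.I * u) * q ^ m /
              (1 - Complex.exp (2 * (π : ℂ) * Complex.I * u) * q ^ m) ^ 2)
          - 1 / u ^ 2)
      (nhdsWithin 0 {u : ℂ | u ≠ 0})
      (nhds (∑' m : ℤ, ∑' n : {n : ℤ // (m, n) ≠ (0, 0)},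
        1 / ((m : ℂ) * τ + ((n : ℤ) : ℂ)) ^ 2)) := by
  classical
  set t := τ.im with htdef
  have ht : 0 < t := hτ
  set ρ := Real.exp (-π * t) with hρ
  have hρ0 : 0 < ρ := Real.exp_pos _
  have hρ1 : ρ < 1 := by
    rw [hρ]
    apply Real.exp_lt_one_iff.mpr
    nlinarith [Real.pi_pos]
  set A : ℤ → ℂ := fun m => ∑' n : {n : ℤ // (m, n) ≠ (0, 0)},
      1 / ((m : ℂ) * τ + ((n : ℤ) : ℂ)) ^ 2 with hA
  have hee_ne : ∀ m : ℤ, m ≠ 0 → ee ((m : ℂ) * τ) ≠ 1 := by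
    intro m hm
    apply ee_ne_one_of_im
    have him : ((m : ℂ) * τ).im = (m : ℝ) * t := by
      simp [Complex.mul_im, htdef]
    rw [him]
    exact mul_ne_zero (Int.cast_ne_zero.mpr hm) (ne_of_gt ht)
  have hAeq : ∀ m : ℤ, m ≠ 0 → A m = B ((m : ℂ) * τ) := by
    intro m hm
    have h1 : A m = g ((m : ℂ) * τ) := by
      rw [hA, g, ← (Equiv.subtypeUnivEquiv
        (fun n : ℤ => (by simp [Prod.ext_iff, hm] : ((m, n) : ℤ × ℤ) ≠ (0, 0)))).tsum_eq
        (fun n : ℤ => 1 / ((m : ℂ) * τ + (n : ℂ)) ^ 2)]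
      rfl
    rw [h1, lipschitz (hee_ne m hm)]
  have hA0 : A 0 = ∑' n : {n : ℤ // n ≠ 0}, 1 / (((n : ℤ) : ℂ)) ^ 2 := by
    rw [hA]
    calc (∑' n : {n : ℤ // (((0:ℤ), n) : ℤ × ℤ) ≠ (0, 0)},
          1 / (((0:ℤ) : ℂ) * τ + ((n : ℤ) : ℂ)) ^ 2)
        = ∑' n : {n : ℤ // (((0:ℤ), n) : ℤ × ℤ) ≠ (0, 0)}, 1 / (((n : ℤ) : ℂ)) ^ 2 := by
          apply tsum_congr
          intro b
          norm_num
      _ = ∑' n : {n : ℤ // n ≠ 0}, 1 / (((n : ℤ) : ℂ)) ^ 2 :=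
          (Equiv.subtypeEquivRight (fun n => by simp [Prod.ext_iff])).tsum_eq
            (fun n : {n : ℤ // n ≠ 0} => 1 / (((n : ℤ) : ℂ)) ^ 2)
  set bnd : ℤ → ℝ := fun m => (2 * π) ^ 2 * ρ ^ m.natAbs / (1 - ρ) ^ 2 with hbnd
  have hbnd_sum : Summable bnd := by
    apply Summable.div_const
    exact (summable_geom_z hρ0.le hρ1).mul_left _
  have hBgeom : ∀ (u : ℂ), |u.im| ≤ t / 2 → ∀ m : ℤ, m ≠ 0 →
      Complex.abs (B (u + (m : ℂ) * τ)) ≤ bnd m := by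
    intro u hu m hm
    exact B_geom ht rfl hu hm
  have hSA : Summable A := by
    apply Summable.of_norm_bounded_eventually hbnd_sum
    rw [Filter.eventually_cofinite]
    apply Set.Finite.subset (Set.finite_singleton 0)
    intro m hm
    simp only [Set.mem_setOf_eq] at hm
    simp only [Set.mem_singleton_iff]
    by_contra hm0
    apply hm
    rw [Complex.norm_eq_abs, hAeq m hm0]
    have h2 := hBgeom 0 (by simp; positivity) m hm0
    rw [zero_add] at h2
    exact h2
  have htarget := tsum_split_zero A hSA
  -- eventual bounds
  have hev_abs : ∀ r : ℝ, 0 < r → ∀ᶠ u in nhdsWithin (0:ℂ) {u : ℂ | u ≠ 0},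
      Complex.abs u ≤ r := by
    intro r hr
    apply eventually_nhdsWithin_of_eventually_nhds
    have hmem : Metric.closedBall (0:ℂ) r ∈ nhds (0:ℂ) := Metric.closedBall_mem_nhds 0 hr
    apply Filter.eventually_of_mem hmem
    intro u hu
    rw [Metric.mem_closedBall, Complex.dist_eq, sub_zero] at hu
    exact hu
  have hev_ne : ∀ᶠ u in nhdsWithin (0:ℂ) {u : ℂ | u ≠ 0}, u ≠ 0 := by
    have := self_mem_nhdsWithin (a := (0:ℂ)) (s := {u : ℂ | u ≠ 0})
    exact Filter.eventually_of_mem this (fun u hu => hu)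
  -- T1
  have T1 : Tendsto (fun u : ℂ => ∑' n : {n : ℤ // n ≠ 0}, 1 / (u + ((n : ℤ) : ℂ)) ^ 2)
      (nhdsWithin 0 {u : ℂ | u ≠ 0}) (nhds (A 0)) := by
    rw [hA0]
    apply tendsto_tsum_of_dominated_convergence
      (bound := fun n : {n : ℤ // n ≠ 0} => 4 / (((n : ℤ)) : ℝ) ^ 2)
    · exact summable_base.subtype _
    · intro n
      have hn : (((n : ℤ)) : ℂ) ≠ 0 := Int.cast_ne_zero.mpr n.2
      have h1 : Tendsto (fun u : ℂ => (u + ((n : ℤ) : ℂ)) ^ 2) (nhds 0)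
          (nhds (((0 : ℂ) + ((n : ℤ) : ℂ)) ^ 2)) :=
        ((continuous_id.add continuous_const).pow 2).tendsto 0
      rw [zero_add] at h1
      exact (tendsto_const_nhds.div h1 (pow_ne_zero 2 hn)).mono_left nhdsWithin_le_nhds
    · filter_upwards [hev_abs (1/2) (by norm_num)] with u hu
      intro n
      exact abs_term_le hu n.2
  -- T2
  have T2 : Tendsto (fun u : ℂ => ∑' m : {m : ℤ // m ≠ 0}, B (u + ((m : ℤ) : ℂ) * τ))
      (nhdsWithin 0 {u : ℂ | u ≠ 0}) (nhds (∑' m : {m : ℤ // m ≠ 0}, A (m : ℤ))) := by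
    have hcong : (∑' m : {m : ℤ // m ≠ 0}, A (m : ℤ))
        = ∑' m : {m : ℤ // m ≠ 0}, B ((((m : ℤ)) : ℂ) * τ) :=
      tsum_congr (fun m => hAeq (m : ℤ) m.2)
    rw [hcong]
    apply tendsto_tsum_of_dominated_convergence
      (bound := fun m : {m : ℤ // m ≠ 0} => bnd (m : ℤ))
    · exact hbnd_sum.subtype _
    · intro m
      have hct : ContinuousAt B ((((m : ℤ)) : ℂ) * τ) := continuousAt_B (hee_ne (m : ℤ) m.2)
      have h1 : Tendsto (fun u : ℂ => u + (((m : ℤ)) : ℂ) * τ) (nhds 0)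
          (nhds ((0:ℂ) + (((m : ℤ)) : ℂ) * τ)) :=
        (continuous_id.add continuous_const).tendsto 0
      rw [zero_add] at h1
      exact (hct.tendsto.comp h1).mono_left nhdsWithin_le_nhds
    · filter_upwards [hev_abs (t/2) (by positivity)] with u hu
      intro m
      rw [Complex.norm_eq_abs]
      exact hBgeom u (le_trans (Complex.abs_im_le_abs u) hu) (m : ℤ) m.2
  -- eventual equality
  have heq : ∀ᶠ u in nhdsWithin (0:ℂ) {u : ℂ | u ≠ 0},
      ((2 * (π : ℂ) * Complex.I) ^ 2 *
            (∑' m : ℤ, Complex.exp (2 * (π : ℂ) * Complex.I * u) * q ^ m /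
              (1 - Complex.exp (2 * (π : ℂ) * Complex.I * u) * q ^ m) ^ 2)
          - 1 / u ^ 2)
      = (∑' n : {n : ℤ // n ≠ 0}, 1 / (u + ((n : ℤ) : ℂ)) ^ 2)
        + ∑' m : {m : ℤ // m ≠ 0}, B (u + ((m : ℤ) : ℂ) * τ) := by
    filter_upwards [hev_abs (1/2) (by norm_num), hev_abs (t/2) (by positivity), hev_ne]
      with u habs1 habs2 hu0
    have heeu : ee u ≠ 1 := by
      intro h
      obtain ⟨n, hn⟩ := ee_eq_one_iff.mp h
      rcases eq_or_ne n 0 with rfl | hne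
      · apply hu0
        rw [hn]
        norm_num
      · rw [hn, abs_intCast'] at habs1
        have := one_le_abs_cast hne
        linarith
    have hterm : ∀ m : ℤ, Complex.exp (2 * (π : ℂ) * Complex.I * u) * q ^ m
        = ee (u + (m : ℂ) * τ) := by
      intro m
      rw [hq, ← Complex.exp_int_mul, ← Complex.exp_add, ee, c]
      congr 1
      push_cast
      ring
    have hc2 : (2 * (π : ℂ) * Complex.I) ^ 2 = c ^ 2 := by rw [c]
    have hSBu : Summable (fun m : ℤ => B (u + (m : ℂ) * τ)) := by
      apply Summable.of_norm_bounded_eventually hbnd_sum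
      rw [Filter.eventually_cofinite]
      apply Set.Finite.subset (Set.finite_singleton 0)
      intro m hm
      simp only [Set.mem_setOf_eq] at hm
      simp only [Set.mem_singleton_iff]
      by_contra hm0
      apply hm
      rw [Complex.norm_eq_abs]
      exact hBgeom u (le_trans (Complex.abs_im_le_abs u) habs2) m hm0
    have hmain : (2 * (π : ℂ) * Complex.I) ^ 2 *
          (∑' m : ℤ, Complex.exp (2 * (π : ℂ) * Complex.I * u) * q ^ m /
            (1 - Complex.exp (2 * (π : ℂ) * Complex.I * u) * q ^ m) ^ 2)
        = ∑' m : ℤ, B (u + (m : ℂ) * τ) := by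
      rw [hc2, ← tsum_mul_left]
      apply tsum_congr
      intro m
      rw [hterm m, B]
    have hsplit := tsum_split_zero _ hSBu
    have h0τ : u + (((0:ℤ)) : ℂ) * τ = u := by push_cast; ring
    rw [h0τ] at hsplit
    have hgu := tsum_split_zero _ (summable_g u)
    have h0' : (1:ℂ) / (u + (((0:ℤ)) : ℂ)) ^ 2 = 1 / u ^ 2 := by push_cast; rw [add_zero]
    rw [h0'] at hgu
    have hlip : g u = B u := lipschitz heeu
    rw [hmain, hsplit]
    rw [g] at hlip
    rw [hgu] at hlip
    linear_combination -hlip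
  rw [htarget]
  exact Tendsto.congr' (heq.mono (fun u h => h.symm)) (T1.add T2)
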